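/- Let m be a natural number and l < m, and suppose ι is a C^{m,γ}-embedding with constant C. Then the map Δ_l : ℝⁿ → L(X, E_l) is Fréchet differentiable at every x ∈ ℝⁿ, and its derivative in the direction v ∈ ℝⁿ is the continuous linear map X → E_l sending f to the l-multilinear map (w₁, …, w_l) ↦ (iteratedFDeriv ℝ (l+1) f̂ x)(v, w₁, …, w_l), i.e. the (l+1)-st iterated derivative of f̂ at x with v inserted in the first slot. -/

import Mathlib

set_option maxHeartbeats 1000000


/-- `ι : X →ₗ[ℝ] ((Fin n → ℝ) → ℝ)` is a `C^{m,γ}`-embedding with constant `C`: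
for every `f : X` the function `f̂ = ι f` is `m`-times continuously differentiable,
all iterated derivatives up to order `m` are bounded by `C‖f‖`, and the `m`-th
iterated derivative is `γ`-Hölder with constant `C‖f‖`. -/
def IsCmGammaEmbedding {X : Type*} [NormedAddCommGroup X] [NormedSpace ℝ X]
    (n : ℕ) (ι : X →ₗ[ℝ] ((Fin n → ℝ) → ℝ)) (m : ℕ) (γ C : ℝ) : Prop :=
  ∀ f : X,
    ContDiff ℝ m (ι f) ∧
    (∀ i : ℕ, i ≤ m → ∀ x : Fin n → ℝ, ‖iteratedFDeriv ℝ i (ι f) x‖ ≤ C * ‖f‖) ∧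
    ∀ x y : Fin n → ℝ,
      ‖iteratedFDeriv ℝ m (ι f) x - iteratedFDeriv ℝ m (ι f) y‖ ≤ C * ‖f‖ * ‖x - y‖ ^ γ

/-- If `l < m` and `ι` is a `C^{m,γ}`-embedding with constant `C`, then
`Δ_l : ℝⁿ → L(X, E_l)` is Fréchet differentiable at every `x`, with derivative in
direction `v` sending `f` to `(w₁, …, w_l) ↦ (iteratedFDeriv ℝ (l+1) f̂ x)(v, w₁, …, w_l)`. -/
theorem deltaL_hasFDerivAt {X : Type*} [NormedAddCommGroup X] [NormedSpace ℝ X]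
    [CompleteSpace X]
    {n : ℕ} (hn : 0 < n) {γ C : ℝ} (hγ : 0 < γ) (hγ1 : γ < 1) (hC : 0 ≤ C)
    (ι : X →ₗ[ℝ] ((Fin n → ℝ) → ℝ)) (m l : ℕ) (hlm : l < m)
    (hemb : IsCmGammaEmbedding n ι m γ C)
    (Δ : (Fin n → ℝ) → (X →L[ℝ] ContinuousMultilinearMap ℝ (fun _ : Fin l => Fin n → ℝ) ℝ))
    (hΔ : ∀ (x : Fin n → ℝ) (f : X), Δ x f = iteratedFDeriv ℝ l (ι f) x) :
    ∀ x : Fin n → ℝ,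
      ∃ D : (Fin n → ℝ) →L[ℝ]
          (X →L[ℝ] ContinuousMultilinearMap ℝ (fun _ : Fin l => Fin n → ℝ) ℝ),
        (∀ (v : Fin n → ℝ) (f : X) (w : Fin l → Fin n → ℝ),
          D v f w = iteratedFDeriv ℝ (l + 1) (ι f) x (Fin.cons v w)) ∧
        HasFDerivAt Δ D x := by
  have hemb : ∀ f : X,
      ContDiff ℝ m (ι f) ∧
      (∀ i : ℕ, i ≤ m → ∀ x : Fin n → ℝ, ‖iteratedFDeriv ℝ i (ι f) x‖ ≤ C * ‖f‖) ∧
      ∀ x y : Fin n → ℝ,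
        ‖iteratedFDeriv ℝ m (ι f) x - iteratedFDeriv ℝ m (ι f) y‖ ≤ C * ‖f‖ * ‖x - y‖ ^ γ := hemb
  intro x
  have hl1m : l + 1 ≤ m := hlm
  -- smoothness
  have hsm : ∀ f : X, ContDiff ℝ m (ι f) := fun f => (hemb f).1
  -- the currying isometry
  set e := continuousMultilinearCurryLeftEquiv ℝ (fun _ : Fin (l + 1) => (Fin n → ℝ)) ℝ with he
  -- differentiability of the l-th derivative and its fderiv
  have hdiff : ∀ (f : X) (z : Fin n → ℝ),
      DifferentiableAt ℝ (iteratedFDeriv ℝ l (ι f)) z := fun f z =>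
    ((hsm f).differentiable_iteratedFDeriv (by exact_mod_cast hlm)) z
  have hfd : ∀ (f : X) (z : Fin n → ℝ),
      fderiv ℝ (iteratedFDeriv ℝ l (ι f)) z = e (iteratedFDeriv ℝ (l + 1) (ι f) z) := by
    intro f z
    rw [fderiv_iteratedFDeriv]
    rfl
  -- the candidate derivative
  have hbound : ∀ f : X, ‖e (iteratedFDeriv ℝ (l + 1) (ι f) x)‖ ≤ C * ‖f‖ := by
    intro f
    rw [e.norm_map]
    exact (hemb f).2.1 (l + 1) hl1m x
  have hcd : ∀ f : X, ContDiff ℝ (l + 1 : ℕ) (ι f) :=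
    fun f => (hsm f).of_le (by exact_mod_cast hl1m)
  let Φlin : X →ₗ[ℝ] ((Fin n → ℝ) →L[ℝ]
      ContinuousMultilinearMap ℝ (fun _ : Fin l => Fin n → ℝ) ℝ) :=
    { toFun := fun f => e (iteratedFDeriv ℝ (l + 1) (ι f) x)
      map_add' := by
        intro f g
        show e (iteratedFDeriv ℝ (l + 1) (ι (f + g)) x)
            = e (iteratedFDeriv ℝ (l + 1) (ι f) x) + e (iteratedFDeriv ℝ (l + 1) (ι g) x)
        have h1 : iteratedFDeriv ℝ (l + 1) (ι (f + g)) x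
            = iteratedFDeriv ℝ (l + 1) (ι f) x + iteratedFDeriv ℝ (l + 1) (ι g) x := by
          rw [map_add ι f g]
          exact iteratedFDeriv_add_apply (hcd f).contDiffAt (hcd g).contDiffAt
        rw [h1, map_add]
      map_smul' := by
        intro c f
        show e (iteratedFDeriv ℝ (l + 1) (ι (c • f)) x)
            = c • e (iteratedFDeriv ℝ (l + 1) (ι f) x)
        have h1 : iteratedFDeriv ℝ (l + 1) (ι (c • f)) x
            = c • iteratedFDeriv ℝ (l + 1) (ι f) x := by
          rw [map_smul ι c f]
          exact iteratedFDeriv_const_smul_apply (hcd f).contDiffAt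
        rw [h1, map_smul] }
  let Φ : X →L[ℝ] ((Fin n → ℝ) →L[ℝ]
      ContinuousMultilinearMap ℝ (fun _ : Fin l => Fin n → ℝ) ℝ) :=
    LinearMap.mkContinuous (𝕜 := ℝ) (E := X)
      (F := (Fin n → ℝ) →L[ℝ] ContinuousMultilinearMap ℝ (fun _ : Fin l => Fin n → ℝ) ℝ)
      Φlin C hbound
  refine ⟨Φ.flip, ?_, ?_⟩
  · intro v f w
    rfl
  -- Hölder-type estimate for the (l+1)-st derivative, uniformly in f
  have key : ∀ (f : X) (z : Fin n → ℝ), ‖z - x‖ ≤ 1 →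
      ‖iteratedFDeriv ℝ (l + 1) (ι f) z - iteratedFDeriv ℝ (l + 1) (ι f) x‖
        ≤ C * ‖f‖ * ‖z - x‖ ^ γ := by
    intro f z hz1
    rcases eq_or_lt_of_le hl1m with hEq | hLt
    · rw [hEq]
      exact (hemb f).2.2 z x
    · -- Lipschitz via mean value using bound on the (l+2)-nd derivative
      have hd2 : ∀ w : Fin n → ℝ, DifferentiableAt ℝ (iteratedFDeriv ℝ (l + 1) (ι f)) w :=
        fun w => ((hsm f).differentiable_iteratedFDeriv (by exact_mod_cast hLt)) w
      have lip : ‖iteratedFDeriv ℝ (l + 1) (ι f) z - iteratedFDeriv ℝ (l + 1) (ι f) x‖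
          ≤ C * ‖f‖ * ‖z - x‖ := by
        refine Convex.norm_image_sub_le_of_norm_fderiv_le
          (fun w _ => hd2 w) (fun w _ => ?_) convex_univ (Set.mem_univ x) (Set.mem_univ z)
        rw [norm_fderiv_iteratedFDeriv]
        exact (hemb f).2.1 (l + 2) hLt w
      rcases eq_or_ne z x with rfl | hzx
      · simp only [sub_self, norm_zero]
        positivity
      · have hzpos : 0 < ‖z - x‖ := by
          rw [norm_pos_iff, sub_ne_zero]; exact hzx
        have : ‖z - x‖ ≤ ‖z - x‖ ^ γ := by
          calc ‖z - x‖ = ‖z - x‖ ^ (1 : ℝ) := (Real.rpow_one _).symm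
          _ ≤ ‖z - x‖ ^ γ := Real.rpow_le_rpow_of_exponent_ge hzpos hz1 hγ1.le
        calc ‖iteratedFDeriv ℝ (l + 1) (ι f) z - iteratedFDeriv ℝ (l + 1) (ι f) x‖
            ≤ C * ‖f‖ * ‖z - x‖ := lip
          _ ≤ C * ‖f‖ * ‖z - x‖ ^ γ := by
              exact mul_le_mul_of_nonneg_left this (by positivity)
  -- main estimate: ‖Δ y - Δ x - Φ.flip (y - x)‖ ≤ C ‖y-x‖^γ ‖y-x‖ for ‖y-x‖ ≤ 1
  have main : ∀ y : Fin n → ℝ, ‖y - x‖ ≤ 1 →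
      ‖Δ y - Δ x - Φ.flip (y - x)‖ ≤ C * ‖y - x‖ ^ γ * ‖y - x‖ := by
    intro y hy1
    refine ContinuousLinearMap.opNorm_le_bound _ (by positivity) (fun f => ?_)
    have happ : (Δ y - Δ x - Φ.flip (y - x)) f =
        iteratedFDeriv ℝ l (ι f) y - iteratedFDeriv ℝ l (ι f) x
          - (Φ f) (y - x) := by
      simp only [ContinuousLinearMap.sub_apply, ContinuousLinearMap.flip_apply,
        hΔ]
    rw [happ]
    have mv : ‖iteratedFDeriv ℝ l (ι f) y - iteratedFDeriv ℝ l (ι f) x - (Φ f) (y - x)‖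
        ≤ (C * ‖f‖ * ‖y - x‖ ^ γ) * ‖y - x‖ := by
      refine Convex.norm_image_sub_le_of_norm_fderiv_le' (f := iteratedFDeriv ℝ l (ι f))
        (φ := Φ f) (s := Metric.closedBall x ‖y - x‖)
        (fun w _ => hdiff f w) (fun w hw => ?_) (convex_closedBall _ _)
        (Metric.mem_closedBall_self (norm_nonneg _)) ?_
      · have hwx : ‖w - x‖ ≤ ‖y - x‖ := by
          rw [Metric.mem_closedBall, dist_eq_norm] at hw; exact hw
        have hΦf : (Φ f : (Fin n → ℝ) →L[ℝ] _) = e (iteratedFDeriv ℝ (l + 1) (ι f) x) := rfl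
        rw [hfd f w, hΦf, ← e.map_sub, e.norm_map]
        calc ‖iteratedFDeriv ℝ (l + 1) (ι f) w - iteratedFDeriv ℝ (l + 1) (ι f) x‖
            ≤ C * ‖f‖ * ‖w - x‖ ^ γ := key f w (hwx.trans hy1)
          _ ≤ C * ‖f‖ * ‖y - x‖ ^ γ := by
              refine mul_le_mul_of_nonneg_left ?_ (by positivity)
              exact Real.rpow_le_rpow (norm_nonneg _) hwx hγ.le
      · rw [Metric.mem_closedBall, dist_eq_norm]
    calc ‖iteratedFDeriv ℝ l (ι f) y - iteratedFDeriv ℝ l (ι f) x - (Φ f) (y - x)‖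
        ≤ (C * ‖f‖ * ‖y - x‖ ^ γ) * ‖y - x‖ := mv
      _ = C * ‖y - x‖ ^ γ * ‖y - x‖ * ‖f‖ := by ring
  -- conclude HasFDerivAt
  refine (hasFDerivAt_iff_isLittleO_nhds_zero (𝕜 := ℝ) (E := Fin n → ℝ)
    (F := X →L[ℝ] ContinuousMultilinearMap ℝ (fun _ : Fin l => Fin n → ℝ) ℝ)).mpr ?_
  rw [Asymptotics.isLittleO_iff]
  intro c hc
  have htend : Filter.Tendsto (fun h : Fin n → ℝ => C * ‖h‖ ^ γ) (nhds 0) (nhds 0) := by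
    have h1 : Filter.Tendsto (fun h : Fin n → ℝ => ‖h‖) (nhds 0) (nhds 0) := by
      simpa using (continuous_norm.tendsto (0 : Fin n → ℝ))
    have h2 : ContinuousAt (fun r : ℝ => r ^ γ) 0 :=
      Real.continuousAt_rpow_const 0 γ (Or.inr hγ.le)
    have h3 : Filter.Tendsto (fun h : Fin n → ℝ => ‖h‖ ^ γ) (nhds 0) (nhds 0) := by
      have := h2.tendsto.comp h1
      simpa [Function.comp_def, Real.zero_rpow hγ.ne'] using this
    simpa using h3.const_mul C
  have hev1 : ∀ᶠ h : (Fin n → ℝ) in nhds 0, C * ‖h‖ ^ γ ≤ c :=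
    htend.eventually (eventually_le_nhds hc)
  have hev2 : ∀ᶠ h : (Fin n → ℝ) in nhds 0, ‖h‖ ≤ 1 := by
    have : Metric.closedBall (0 : Fin n → ℝ) 1 ∈ nhds (0 : Fin n → ℝ) :=
      Metric.closedBall_mem_nhds _ one_pos
    filter_upwards [this] with h hh
    simpa [dist_eq_norm] using hh
  filter_upwards [hev1, hev2] with h hc' h1
  have hsub : (x + h) - x = h := by abel
  have := main (x + h) (by rwa [hsub])
  rw [hsub] at this
  calc ‖Δ (x + h) - Δ x - Φ.flip h‖ ≤ C * ‖h‖ ^ γ * ‖h‖ := this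
    _ ≤ c * ‖h‖ := mul_le_mul_of_nonneg_right hc' (norm_nonneg _)
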